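/- Let x ≥ 2 be a real number and k a natural number such that 2 ≤ x^(2^{−k}) (real power). Then ∑_{i=0}^{k} x^(1 − 2^{−i}) ≤ x. (This bounds the total number of tree nodes of an ideal Interpolation Search Tree of size x summed over all k+1 levels by x, giving the linear space and linear construction-time bound of Theorem 1.) -/

import Mathlib

theorem ist_total_nodes_le (x : ℝ) (k : ℕ) (hx : 2 ≤ x)
    (hk : 2 ≤ x ^ (((2 : ℝ) ^ k)⁻¹)) :
    ∑ i ∈ Finset.range (k + 1), x ^ (1 - ((2 : ℝ) ^ i)⁻¹) ≤ x := by
  have hx0 : (0:ℝ) < x := by linarith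
  have key : ∀ i ∈ Finset.range (k+1),
      x ^ (1 - ((2 : ℝ) ^ i)⁻¹) ≤ x * (1/2:ℝ)^(k+1-i) := by
    intro i hi
    have hik : i ≤ k := Nat.lt_succ_iff.mp (Finset.mem_range.mp hi)
    have h1 : x ^ (((2:ℝ)^i)⁻¹) = (x ^ (((2:ℝ)^k)⁻¹)) ^ ((2:ℕ)^(k-i)) := by
      rw [← Real.rpow_natCast (x ^ (((2:ℝ)^k)⁻¹)), ← Real.rpow_mul hx0.le]
      congr 1
      push_cast
      field_simp
      rw [← pow_add]
      congr 1
      omega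
    have h2 : (2:ℝ)^((2:ℕ)^(k-i)) ≤ x ^ (((2:ℝ)^i)⁻¹) := by
      rw [h1]
      exact pow_le_pow_left₀ (by norm_num) hk _
    have h3 : (2:ℝ)^(k+1-i) ≤ x ^ (((2:ℝ)^i)⁻¹) := by
      refine le_trans ?_ h2
      apply pow_le_pow_right₀ (by norm_num)
      have := Nat.lt_two_pow_self (n := k - i)
      omega
    have h4 : x ^ (1 - ((2:ℝ)^i)⁻¹) = x / x ^ (((2:ℝ)^i)⁻¹) := by
      rw [Real.rpow_sub hx0, Real.rpow_one]
    rw [h4, div_le_iff₀ (by positivity)]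
    have h5 : (1:ℝ) ≤ (1/2:ℝ)^(k+1-i) * x ^ (((2:ℝ)^i)⁻¹) := by
      rw [div_pow, one_pow, div_mul_eq_mul_div, le_div_iff₀ (by positivity), one_mul]
      linarith [h3]
    calc x = x * 1 := by ring
      _ ≤ x * ((1/2:ℝ)^(k+1-i) * x ^ (((2:ℝ)^i)⁻¹)) :=
          mul_le_mul_of_nonneg_left h5 hx0.le
      _ = x * (1/2:ℝ)^(k+1-i) * x ^ (((2:ℝ)^i)⁻¹) := by ring
  have hsum : ∑ i ∈ Finset.range (k+1), (1/2:ℝ)^(k+1-i) ≤ 1 := by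
    have hrefl := Finset.sum_range_reflect (fun j => (1/2:ℝ)^(j+1)) (k+1)
    have heq : ∑ i ∈ Finset.range (k+1), (1/2:ℝ)^(k+1-i)
        = ∑ j ∈ Finset.range (k+1), (1/2:ℝ)^(j+1) := by
      rw [← hrefl]
      apply Finset.sum_congr rfl
      intro i hi
      have hik : i ≤ k := Nat.lt_succ_iff.mp (Finset.mem_range.mp hi)
      congr 1
      omega
    rw [heq]
    have : ∑ j ∈ Finset.range (k+1), (1/2:ℝ)^(j+1)
        = (1/2) * ∑ j ∈ Finset.range (k+1), (1/2:ℝ)^j := by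
      rw [Finset.mul_sum]
      apply Finset.sum_congr rfl
      intro i _
      ring
    rw [this]
    have := sum_geometric_two_le (k+1)
    linarith
  calc ∑ i ∈ Finset.range (k + 1), x ^ (1 - ((2 : ℝ) ^ i)⁻¹)
      ≤ ∑ i ∈ Finset.range (k+1), x * (1/2:ℝ)^(k+1-i) := Finset.sum_le_sum key
    _ = x * ∑ i ∈ Finset.range (k+1), (1/2:ℝ)^(k+1-i) := by rw [Finset.mul_sum]
    _ ≤ x * 1 := mul_le_mul_of_nonneg_left hsum hx0.le
    _ = x := mul_one x
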